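/- In the bandit social learning model, suppose each agent t is η_t-pessimistic, i.e., Ind_{a,t} = max(0, μ̂_{a,t} − sqrt(η_t/n_{a,t})). Fix η ≥ max_t η_t and thresholds q₁, q₂ with sqrt(η/N₀) < q₁ < q₂. If the average of the first N₀ tape rewards of arm 1 is at most q₁ and the average of the first n tape rewards of arm 2 is at least q₂ for all n ∈ [T], then no agent ever chooses arm 1. -/

import Mathlib

/-- Number of samples of `arm` available to agent `t` (initial `N₀` samples
plus the pulls by agents in rounds `0,…,t−1`). -/
def numSamples (a : ℕ → Fin 2) (N₀ t : ℕ) (arm : Fin 2) : ℕ :=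
  N₀ + ((Finset.range t).filter fun s => a s = arm).card

/-- Average of the first `n` tape rewards of `arm`. -/
noncomputable def tapeAvg (tape : Fin 2 → ℕ → ℝ) (arm : Fin 2) (n : ℕ) : ℝ :=
  (∑ i ∈ Finset.range n, tape arm i) / n

/-- Pessimistic agents: agent `t` is `ηs t`-pessimistic, i.e.
`Ind t arm = max 0 (μ̂ − sqrt(ηs t / n))`.  Arm `0` is the good arm (arm 1 of
the paper) and arm `1` the bad arm (arm 2). -/
theorem stmt_18 (T N₀ : ℕ) (hN₀ : 1 ≤ N₀) (ηs : ℕ → ℝ) (hηs : ∀ t, 0 ≤ ηs t)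
    (η : ℝ) (hη : ∀ t < T, ηs t ≤ η)
    (tape : Fin 2 → ℕ → ℝ) (a : ℕ → Fin 2) (Ind : ℕ → Fin 2 → ℝ)
    (hPess : ∀ t < T, ∀ arm : Fin 2,
      Ind t arm = max 0 (tapeAvg tape arm (numSamples a N₀ t arm) -
        Real.sqrt (ηs t / (numSamples a N₀ t arm))))
    (hChoice : ∀ t < T, ∀ arm : Fin 2, Ind t arm ≤ Ind t (a t))
    (q₁ q₂ : ℝ) (hq₁ : Real.sqrt (η / N₀) < q₁) (hq : q₁ < q₂)
    (hArm1 : tapeAvg tape 0 N₀ ≤ q₁)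
    (hArm2 : ∀ n : ℕ, 1 ≤ n → n ≤ N₀ + T → q₂ ≤ tapeAvg tape 1 n) :
    ∀ t < T, a t ≠ 0 := by
  intro t
  induction t using Nat.strong_induction_on with
  | _ t ih =>
  intro ht hat
  have ha : ∀ s, s < t → a s = 1 := by
    intro s hs
    have h := ih s hs (hs.trans ht)
    have hv : (a s).val ≠ 0 := fun hv => h (Fin.ext hv)
    have := (a s).isLt
    exact Fin.ext (by omega)
  have h0 : numSamples a N₀ t 0 = N₀ := by
    unfold numSamples
    have he : ((Finset.range t).filter fun s => a s = 0) = ∅ := by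
      apply Finset.filter_eq_empty_iff.mpr
      intro s hs
      simp [ha s (Finset.mem_range.mp hs)]
    simp [he]
  have h1 : numSamples a N₀ t 1 = N₀ + t := by
    unfold numSamples
    have he : ((Finset.range t).filter fun s => a s = 1) = Finset.range t := by
      apply Finset.filter_eq_self.mpr
      intro s hs
      exact ha s (Finset.mem_range.mp hs)
    simp [he]
  have hN₀R : (0:ℝ) < (N₀:ℝ) := by exact_mod_cast hN₀
  have hηt : 0 ≤ ηs t := hηs t
  have hηη : ηs t ≤ η := hη t ht
  have hη0 : 0 ≤ η := hηt.trans hηη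
  set s1 : ℝ := Real.sqrt (ηs t / N₀) with hs1
  set s2 : ℝ := Real.sqrt (ηs t / (N₀ + t : ℕ)) with hs2
  have hnR : (0:ℝ) < ((N₀ + t : ℕ) : ℝ) := by
    push_cast; linarith
  have hle : ((N₀:ℝ)) ≤ ((N₀ + t : ℕ) : ℝ) := by push_cast; linarith [Nat.zero_le t]
  have hs21 : s2 ≤ s1 := by
    apply Real.sqrt_le_sqrt
    gcongr
  have hs2q : s2 < q₂ := by
    have h1 : s2 ≤ Real.sqrt (η / N₀) := by
      apply Real.sqrt_le_sqrt
      calc ηs t / ((N₀ + t : ℕ) : ℝ) ≤ η / ((N₀ + t : ℕ) : ℝ) := by gcongr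
        _ ≤ η / N₀ := by gcongr
    linarith
  have hInd0 : Ind t 0 ≤ max 0 (q₁ - s1) := by
    rw [hPess t ht 0, h0]
    exact max_le_max le_rfl (by linarith)
  have hInd1 : q₂ - s2 ≤ Ind t 1 := by
    rw [hPess t ht 1, h1]
    have hA := hArm2 (N₀ + t) (le_trans hN₀ (Nat.le_add_right _ _)) (by omega)
    exact le_max_of_le_right (by linarith)
  have hlt : max 0 (q₁ - s1) < q₂ - s2 := by
    apply max_lt <;> linarith
  have hc := hChoice t ht 1
  rw [hat] at hc
  linarith
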